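/- Let H be a connected paw-free graph containing a triangle. Then H is complete multipartite (with at least three parts). -/

import Mathlib

open SimpleGraph

/-- The paw: triangle 0,1,2 plus pendant vertex 3 attached at 2. -/
def paw : SimpleGraph (Fin 4) :=
  SimpleGraph.fromEdgeSet {s(0,1), s(0,2), s(1,2), s(2,3)}

/-- `G` contains an induced copy of the paw. -/
def HasInducedPaw {V : Type*} (G : SimpleGraph V) : Prop :=
  ∃ f : Fin 4 ↪ V, ∀ a b : Fin 4, paw.Adj a b ↔ G.Adj (f a) (f b)

def PawFree {V : Type*} (G : SimpleGraph V) : Prop := ¬ HasInducedPaw G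

/-- `G` is complete multipartite with parts given as the fibers of `part`:
two vertices are adjacent iff they lie in different parts. -/
def IsCMWith {V ι : Type*} (G : SimpleGraph V) (part : V → ι) : Prop :=
  ∀ u v : V, G.Adj u v ↔ part u ≠ part v

/-- `G` is complete multipartite. -/
def IsCM {V : Type*} (G : SimpleGraph V) : Prop :=
  ∃ part : V → V, IsCMWith G part

/-- `G` is complete multipartite with at least three parts. -/
def IsCM3 {V : Type*} (G : SimpleGraph V) : Prop :=
  ∃ part : V → V, IsCMWith G part ∧
    ∃ u v w : V, part u ≠ part v ∧ part u ≠ part w ∧ part v ≠ part w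

/-- The graph `G Δ A`: edge set is the symmetric difference of `E(G)` and `A`. -/
def edit {V : Type*} (G : SimpleGraph V) (A : Finset (Sym2 V)) : SimpleGraph V :=
  SimpleGraph.fromEdgeSet (symmDiff G.edgeSet (A : Set (Sym2 V)))

/-- If `x` is adjacent to exactly one vertex of a triangle, we get an induced paw. -/
lemma pendant_aux {V : Type*} {G : SimpleGraph V} (hpf : PawFree G) {a b c x : V}
    (hab : G.Adj a b) (hac : G.Adj a c) (hbc : G.Adj b c)
    (hxc : G.Adj x c) (hxa : ¬ G.Adj x a) (hxb : ¬ G.Adj x b) : False := by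
  have hxa' : x ≠ a := fun h => hxb (h ▸ hab)
  have hxb' : x ≠ b := fun h => hxa (h ▸ hab.symm)
  have hax : ¬ G.Adj a x := fun h => hxa h.symm
  have hbx : ¬ G.Adj b x := fun h => hxb h.symm
  apply hpf
  refine ⟨⟨![a,b,c,x], ?_⟩, ?_⟩
  · intro i j hij
    fin_cases i <;> fin_cases j <;>
      simp_all [hab.ne, hac.ne, hbc.ne, hxc.ne, hxa', hxb']
  · intro i j
    show paw.Adj i j ↔ G.Adj (![a,b,c,x] i) (![a,b,c,x] j)
    fin_cases i <;> fin_cases j <;>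
      simp [paw, Sym2.eq, Sym2.rel_iff', hab, hac, hbc, hxc, hxa, hxb, hax, hbx,
        hab.symm, hac.symm, hbc.symm, hxc.symm, G.irrefl]

section Main

variable {V : Type*} {G : SimpleGraph V}

/-- In a connected paw-free graph with a triangle, every vertex is in a triangle. -/
lemma in_triangle (hconn : G.Connected) (hpf : PawFree G)
    (htri : ∃ a b c : V, G.Adj a b ∧ G.Adj a c ∧ G.Adj b c) :
    ∀ v : V, ∃ b c : V, G.Adj v b ∧ G.Adj v c ∧ G.Adj b c := by
  obtain ⟨a, b, c, hab, hac, hbc⟩ := htri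
  have step : ∀ v x : V, (∃ b c : V, G.Adj v b ∧ G.Adj v c ∧ G.Adj b c) →
      G.Adj v x → ∃ b c : V, G.Adj x b ∧ G.Adj x c ∧ G.Adj b c := by
    rintro v x ⟨p, q, hvp, hvq, hpq⟩ hvx
    by_cases hxp : G.Adj x p
    · exact ⟨v, p, hvx.symm, hxp, hvp⟩
    by_cases hxq : G.Adj x q
    · exact ⟨v, q, hvx.symm, hxq, hvq⟩
    exact absurd (pendant_aux hpf hpq hvp.symm hvq.symm hvx.symm hxp hxq) not_false
  intro v
  have hreach : G.Reachable a v := hconn a v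
  obtain ⟨w⟩ := hreach
  have key : ∀ {u u' : V} (_ : G.Walk u u'),
      (∃ b c : V, G.Adj u b ∧ G.Adj u c ∧ G.Adj b c) →
      ∃ b c : V, G.Adj u' b ∧ G.Adj u' c ∧ G.Adj b c := by
    intro u u' w
    induction w with
    | nil => exact id
    | cons h p ih => exact fun hu => ih (step _ _ hu h)
  exact key w ⟨b, c, hab, hac, hbc⟩

/-- Every edge is in a triangle. -/
lemma edge_in_triangle (hconn : G.Connected) (hpf : PawFree G)
    (htri : ∃ a b c : V, G.Adj a b ∧ G.Adj a c ∧ G.Adj b c) :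
    ∀ u v : V, G.Adj u v → ∃ w : V, G.Adj u w ∧ G.Adj v w := by
  intro u v huv
  obtain ⟨p, q, hup, huq, hpq⟩ := in_triangle hconn hpf htri u
  by_cases hvp : v = p
  · exact ⟨q, huq, hvp ▸ hpq⟩
  by_cases hvq : v = q
  · exact ⟨p, hup, hvq ▸ hpq.symm⟩
  by_cases hvp' : G.Adj v p
  · exact ⟨p, hup, hvp'⟩
  by_cases hvq' : G.Adj v q
  · exact ⟨q, huq, hvq'⟩
  exact absurd (pendant_aux hpf hpq hup.symm huq.symm huv.symm hvp' hvq') not_false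

/-- No induced K₂ ∪ K₁. -/
lemma no_K2K1 (hconn : G.Connected) (hpf : PawFree G)
    (htri : ∃ a b c : V, G.Adj a b ∧ G.Adj a c ∧ G.Adj b c) :
    ∀ n : ℕ, ∀ x z y : V, G.Adj x z → ¬ G.Adj y x → ¬ G.Adj y z →
      G.dist y x = n → False := by
  have hET := edge_in_triangle hconn hpf htri
  intro n
  induction n using Nat.strong_induction_on with
  | _ n ih =>
    intro x z y hxz hyx hyz hdist
    have hyx' : y ≠ x := by rintro rfl; exact hyz hxz
    have hn0 : n ≠ 0 := by
      rintro rfl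
      exact hyx' ((hconn.dist_eq_zero_iff).mp hdist)
    -- get a walk of length n from x to y
    obtain ⟨w, hw⟩ := (hconn x y).exists_walk_length_eq_dist
    rw [SimpleGraph.dist_comm, hdist] at hw
    cases w with
    | nil => simp at hw; exact hn0 hw.symm
    | @cons _ p _ hxp t =>
      simp only [SimpleGraph.Walk.length_cons] at hw
      have hdyp : G.dist y p ≤ n - 1 := by
        rw [SimpleGraph.dist_comm]
        calc G.dist p y ≤ t.length := SimpleGraph.dist_le t
        _ = n - 1 := by omega
      by_cases hyp : G.Adj y p
      · -- p adjacent to y; p ≠ z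
        have hpz' : p ≠ z := by rintro rfl; exact hyz hyp
        by_cases hpz : G.Adj p z
        · exact pendant_aux hpf hxz hxp hpz.symm hyp hyx hyz
        · obtain ⟨w0, hxw0, hzw0⟩ := hET x z hxz
          have hpw0 : G.Adj p w0 := by
            by_contra hpw0
            exact pendant_aux hpf hzw0 (hxz.symm) hxw0.symm hxp.symm hpz hpw0
          have hyw0 : G.Adj y w0 := by
            by_contra hyw0
            exact pendant_aux hpf hxw0 hxp hpw0.symm hyp hyx hyw0
          exact pendant_aux hpf hxz hxw0 hzw0 hyw0 hyx hyz
      · -- recurse on the edge (p, x)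
        have hlt : G.dist y p < n := lt_of_le_of_lt hdyp (by omega)
        exact ih (G.dist y p) hlt p x y hxp.symm hyp hyx rfl

end Main

/-- A connected paw-free graph containing a triangle is complete multipartite
with at least three parts. -/
theorem statement_7 {V : Type*} (G : SimpleGraph V) (hconn : G.Connected)
    (hpf : PawFree G) (htri : ∃ a b c : V, G.Adj a b ∧ G.Adj a c ∧ G.Adj b c) :
    IsCM3 G := by
  classical
  have hK := no_K2K1 hconn hpf htri
  -- non-adjacency is an equivalence relation
  have htrans : ∀ u v w : V, ¬ G.Adj u v → ¬ G.Adj v w → ¬ G.Adj u w := by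
    intro u v w huv hvw huw
    by_cases h1 : v = u
    · exact (h1 ▸ hvw) huw
    by_cases h2 : v = w
    · exact huv (h2 ▸ huw)
    exact hK (G.dist v u) u w v huw (fun h => huv h.symm) hvw rfl
  let s : Setoid V := ⟨fun u v => ¬ G.Adj u v,
    ⟨fun u => G.irrefl, fun {u v} h h' => h h'.symm, fun {u v w} h h' => htrans u v w h h'⟩⟩
  refine ⟨fun v => (Quotient.mk s v).out, ?_, ?_⟩
  · intro u v
    constructor
    · intro huv heq
      have heq' : (Quotient.mk s u).out = (Quotient.mk s v).out := heq
      have : Quotient.mk s u = Quotient.mk s v := by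
        rw [← Quotient.out_eq (Quotient.mk s u), ← Quotient.out_eq (Quotient.mk s v), heq']
      exact (Quotient.exact this) huv
    · intro hne
      by_contra hadj
      exact hne (congrArg Quotient.out (Quotient.sound (hadj : ¬ G.Adj u v)))
  · obtain ⟨a, b, c, hab, hac, hbc⟩ := htri
    have key : ∀ u v : V, G.Adj u v → (Quotient.mk s u).out ≠ (Quotient.mk s v).out := by
      intro u v huv heq
      have : Quotient.mk s u = Quotient.mk s v := by
        rw [← Quotient.out_eq (Quotient.mk s u), ← Quotient.out_eq (Quotient.mk s v), heq]
      exact (Quotient.exact this) huv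
    exact ⟨a, b, c, key a b hab, key a c hac, key b c hbc⟩
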